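/- Choice for injective names: if some e ∈ A realizes ∀u∈x ∃v∈y φ(u,v), where x and y are injective names in V_tr(A), then there exists a function f : x° → y° such that φ°(u, f(u)) holds for all u ∈ x°. The function can be taken to be f = {⟨u°, v°⟩ | ⟨a,u⟩ ∈ x* ∧ ⟨b,v⟩ ∈ y* ∧ (e·a)₀ ≃ b}. -/
import Mathlib


/-- Lifting of a partial binary application to `Option`. -/
def oap {A : Type} (app : A → A → Option A) (x y : Option A) : Option A :=
  x.bind fun a => y.bind fun b => app a b

/-- A partial combinatory algebra, together with chosen pairing and projection
combinators (which exist in any pca). -/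
structure PCA (A : Type) where
  app : A → A → Option A
  k : A
  s : A
  pairc : A
  pr0 : A
  pr1 : A
  nontrivial : ∃ a b : A, a ≠ b
  k_def : ∀ a : A, (app k a).isSome
  s_def : ∀ a : A, (app s a).isSome
  s2_def : ∀ a b : A, (oap app (app s a) (some b)).isSome
  k_spec : ∀ a b : A, oap app (app k a) (some b) = some a
  s_spec : ∀ a b c : A, oap app (oap app (app s a) (some b)) (some c)
      = oap app (oap app (some a) (some c)) (oap app (some b) (some c))
  pair_def : ∀ a b : A, (oap app (app pairc a) (some b)).isSome
  pr0_spec : ∀ a b : A, oap app (some pr0) (oap app (app pairc a) (some b)) = some a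
  pr1_spec : ∀ a b : A, oap app (some pr1) (oap app (app pairc a) (some b)) = some b
/-- Names in the realizability structure `V_tr(A)`: a name is a pair
`⟨x, x̂⟩` of a set `x` together with a family (the set `x̂ ⊆ A × V_tr(A)`) of
labelled names. -/
inductive VName (A : Type) : Type 2
  | mk (deg : ZFSet.{0}) (ι : Type 1) (lab : ι → A) (elt : ι → VName A)

/-- The truth component `x°` (first component) of a name. -/
def VName.deg {A : Type} : VName A → ZFSet
  | .mk x _ _ _ => x

/-- The index type of the second component `x*` of a name. -/
def VName.ι {A : Type} : VName A → Type 1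
  | .mk _ i _ _ => i

/-- The labels (realizers) of the second component `x*`. -/
def VName.lab {A : Type} : (v : VName A) → v.ι → A
  | .mk _ _ l _ => l

/-- The members of the second component `x*`. -/
def VName.elt {A : Type} : (v : VName A) → v.ι → VName A
  | .mk _ _ _ e => e

/-- A pair `⟨x, x̂⟩` is a genuine member of `V_tr(A)` when, hereditarily,
`u° ∈ x` for every `⟨a,u⟩ ∈ x̂`. -/
def VName.IsName {A : Type} : VName A → Prop
  | .mk x _ _ e => (∀ i, (e i).deg ∈ x) ∧ ∀ i, (e i).IsName
/-- A name `x ∈ V_tr(A)` is injective if (i) `x° = {u° | ∃a ⟨a,u⟩ ∈ x*}` and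
(ii) for `⟨a,u⟩, ⟨b,v⟩ ∈ x*`, `a = b` iff `u° = v°`. -/
def InjectiveName {A : Type} (v : VName A) : Prop :=
  (∀ z : ZFSet, z ∈ v.deg ↔ ∃ i : v.ι, (v.elt i).deg = z) ∧
  ∀ i j : v.ι, (v.lab i = v.lab j ↔ (v.elt i).deg = (v.elt j).deg)

/-- Choice for injective names: if `e ⊩ ∀u∈x ∃v∈y φ(u,v)` with `x, y`
injective, then there is a (set-theoretic) function `f : x° → y°` with
`φ°(u, f(u))` for all `u ∈ x°`; the function can be taken to be
`f = {⟨u°,v°⟩ | ⟨a,u⟩ ∈ x* ∧ ⟨b,v⟩ ∈ y* ∧ (e·a)₀ ≃ b}`.  Here `φ` is given by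
its realizability relation `realφ` and its truth `truthφ`, subject to the
truth lemma. -/
theorem choice_for_injective_names {A : Type} (P : PCA A)
    (realφ : A → VName A → VName A → Prop) (truthφ : ZFSet → ZFSet → Prop)
    (truthLemma : ∀ (c : A) (u v : VName A), realφ c u v → truthφ u.deg v.deg)
    (x y : VName A) (hx : InjectiveName x) (hy : InjectiveName y) (e : A)
    (he : (∀ u ∈ x.deg, ∃ v ∈ y.deg, truthφ u v) ∧
      ∀ i : x.ι, ∃ b : A, P.app e (x.lab i) = some b ∧
        ∃ j : y.ι, P.app P.pr0 b = some (y.lab j) ∧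
          ∃ c : A, P.app P.pr1 b = some c ∧ realφ c (x.elt i) (y.elt j)) :
    ∃ f : ZFSet, ZFSet.IsFunc x.deg y.deg f ∧
      (∀ u w : ZFSet, ZFSet.pair u w ∈ f → truthφ u w) ∧
      (∀ u w : ZFSet, ZFSet.pair u w ∈ f ↔
        ∃ (i : x.ι) (j : y.ι) (b : A),
          P.app e (x.lab i) = some b ∧ P.app P.pr0 b = some (y.lab j) ∧
          u = (x.elt i).deg ∧ w = (y.elt j).deg) := by

  classical
  set p : ZFSet → ZFSet → Prop := fun u w =>
    ∃ (i : x.ι) (j : y.ι) (b : A),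
      P.app e (x.lab i) = some b ∧ P.app P.pr0 b = some (y.lab j) ∧
      u = (x.elt i).deg ∧ w = (y.elt j).deg with hp
  have hmem : ∀ u w : ZFSet, ZFSet.pair u w ∈ ZFSet.pairSep p x.deg y.deg ↔ p u w := by
    intro u w
    rw [ZFSet.mem_pairSep]
    constructor
    · rintro ⟨a, -, b, -, hpair, hpab⟩
      obtain ⟨h1, h2⟩ := ZFSet.pair_injective hpair
      rw [h1, h2]; exact hpab
    · rintro ⟨i, j, b, hb, hj, rfl, rfl⟩
      exact ⟨_, (hx.1 _).2 ⟨i, rfl⟩, _, (hy.1 _).2 ⟨j, rfl⟩, rfl, i, j, b, hb, hj, rfl, rfl⟩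
  refine ⟨ZFSet.pairSep p x.deg y.deg, ⟨?_, ?_⟩, ?_, hmem⟩
  · intro z hz
    rw [ZFSet.mem_pairSep] at hz
    obtain ⟨a, ha, b, hb, rfl, -⟩ := hz
    exact ZFSet.pair_mem_prod.2 ⟨ha, hb⟩
  · intro z hz
    obtain ⟨i, rfl⟩ := (hx.1 z).1 hz
    obtain ⟨b, hb, j, hj, c, hc, hr⟩ := he.2 i
    refine ⟨(y.elt j).deg, (hmem _ _).2 ⟨i, j, b, hb, hj, rfl, rfl⟩, ?_⟩
    intro w hw
    obtain ⟨i', j', b', hb', hj', hu', rfl⟩ := (hmem _ _).1 hw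
    have hlab : x.lab i' = x.lab i := (hx.2 i' i).2 hu'.symm
    rw [hlab, hb] at hb'
    cases hb'
    rw [hj] at hj'
    exact (hy.2 j' j).1 (Option.some_injective _ hj'.symm)
  · intro u w hw
    obtain ⟨i, j, b, hb, hj, rfl, rfl⟩ := (hmem _ _).1 hw
    obtain ⟨b', hb', j', hj', c, hc, hr⟩ := he.2 i
    rw [hb] at hb'
    cases hb'
    rw [hj] at hj'
    have : (y.elt j').deg = (y.elt j).deg := (hy.2 j' j).1 (Option.some_injective _ hj'.symm)
    exact this ▸ truthLemma c _ _ hr
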